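/- Let k be a non-archimedean local field, V a finite-dimensional k-vector space with a non-archimedean norm, and W ⊆ V a subspace (with the restricted norm). Suppose the inequality H2 holds for V, i.e., for every polynomial function g : V → k: if Z(g) = ∅ there exist C > 0, β ≥ 0 with |g(x)| ≥ C/‖x‖^β for all ‖x‖ ≥ 1, and if Z(g) ≠ ∅ there exist C > 0, α, β ≥ 0 with |g(x)| ≥ C·dist(x, Z(g))^α/‖x‖^β for all ‖x‖ ≥ 1. Then H2 also holds for W, i.e., the same two conclusions hold for every polynomial function f : W → k, with zero locus, distance and norm taken in W. -/

import Mathlib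

open MvPolynomial

/-- A function `f : V → k` on a finite-dimensional `k`-vector space is a
polynomial function if, in the coordinates of some basis, it is given by a
multivariate polynomial. -/
def IsPolyFun (k : Type*) [Field k] {V : Type*} [AddCommGroup V] [Module k V]
    (f : V → k) : Prop :=
  ∃ (n : ℕ) (b : Module.Basis (Fin n) k V) (P : MvPolynomial (Fin n) k),
    ∀ v : V, f v = eval (fun i => b.repr v i) P

/-- The Hörmander inequality H2 holds on the normed `k`-vector space `V`:
for every polynomial function `g : V → k`, if `Z(g) = ∅` then
`|g(x)| ≥ C/‖x‖^β` for `‖x‖ ≥ 1`, and if `Z(g) ≠ ∅` then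
`|g(x)| ≥ C · dist(x, Z(g))^α / ‖x‖^β` for `‖x‖ ≥ 1`. -/
def H2Holds (k : Type*) [NontriviallyNormedField k] (V : Type*)
    [NormedAddCommGroup V] [NormedSpace k V] : Prop :=
  ∀ g : V → k, IsPolyFun k g →
    ({x : V | g x = 0} = ∅ →
      ∃ C > (0 : ℝ), ∃ β : ℝ, 0 ≤ β ∧
        ∀ x : V, 1 ≤ ‖x‖ → C / ‖x‖ ^ β ≤ ‖g x‖) ∧
    ({x : V | g x = 0}.Nonempty →
      ∃ C > (0 : ℝ), ∃ α β : ℝ, 0 ≤ α ∧ 0 ≤ β ∧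
        ∀ x : V, 1 ≤ ‖x‖ →
          C * Metric.infDist x {y : V | g y = 0} ^ α / ‖x‖ ^ β ≤ ‖g x‖)

/-- If the Hörmander inequality H2 holds for a
finite-dimensional non-archimedean normed `k`-vector space `V`, then it also
holds for every subspace `W ⊆ V` with the restricted norm. -/
theorem stmt8 {k : Type*} [NontriviallyNormedField k] [IsUltrametricDist k]
    [LocallyCompactSpace k]
    {V : Type*} [NormedAddCommGroup V] [NormedSpace k V] [FiniteDimensional k V]
    [IsUltrametricDist V]
    (W : Submodule k V) (h : H2Holds k V) : H2Holds k W := by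
  haveI : ProperSpace k := ProperSpace.of_locallyCompactSpace k
  intro f hf
  obtain ⟨n, b, P, hP⟩ := hf
  obtain ⟨W', hW'⟩ := Submodule.exists_isCompl W
  set π : V →ₗ[k] W := W.linearProjOfIsCompl W' hW' with hπdef
  have hππ : ∀ w : W, π (w : V) = w := fun w =>
    Submodule.linearProjOfIsCompl_apply_left hW' w
  set πc : V →L[k] W := LinearMap.toContinuousLinearMap π with hπc
  set M : ℝ := max ‖πc‖ 1 with hMdef
  have hM0 : (0:ℝ) < M := lt_of_lt_of_le one_pos (le_max_right _ _)
  have hM : ∀ v : V, ‖π v‖ ≤ M * ‖v‖ := fun v =>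
    (πc.le_opNorm v).trans
      (mul_le_mul_of_nonneg_right (le_max_left _ _) (norm_nonneg v))
  set g : V → k := fun v => f (π v) with hgdef
  -- g is a polynomial function on V
  have hg : IsPolyFun k g := by
    set c := Module.finBasis k V with hc
    refine ⟨Module.finrank k V, c,
      aeval (fun i => ∑ j, MvPolynomial.C (b.repr (π (c j)) i) * X j) P, ?_⟩
    intro v
    have key : ∀ i : Fin n,
        b.repr (π v) i = ∑ j, c.repr v j * b.repr (π (c j)) i := by
      intro i
      conv_lhs => rw [← Module.Basis.sum_repr c v]
      rw [map_sum, map_sum, Finsupp.finset_sum_apply]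
      simp [Finsupp.finset_sum_apply, mul_comm]
    show f (π v) = _
    rw [hP, aeval_eq_bind₁,
      show (eval fun j => (c.repr v) j) = eval₂Hom (RingHom.id k) fun j => (c.repr v) j from rfl,
      eval₂Hom_bind₁]
    have harg : (fun i => (b.repr (π v)) i) = fun i =>
        (eval₂Hom (RingHom.id k) fun j => (c.repr v) j)
          (∑ j, MvPolynomial.C (b.repr (π (c j)) i) * X j) := by
      funext i
      rw [key i]
      simp [mul_comm]
    rw [show (eval fun i => (b.repr (π v)) i)
        = eval₂Hom (RingHom.id k) (fun i => (b.repr (π v)) i) from rfl, harg]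
  have hgZ : ∀ w : W, g (w : V) = f w := fun w => by simp [hgdef, hππ w]
  have hcoe : ∀ w : W, ‖(w : V)‖ = ‖w‖ := fun w => rfl
  obtain ⟨hEmp, hNE⟩ := h g hg
  constructor
  · -- empty zero set case
    intro hZW
    have hZV : {x : V | g x = 0} = ∅ := by
      ext v
      simp only [Set.mem_empty_iff_false, iff_false, Set.mem_setOf_eq, hgdef]
      intro hv
      have : (π v) ∈ {x : W | f x = 0} := hv
      rw [hZW] at this
      exact this
    obtain ⟨C, hC, β, hβ, hineq⟩ := hEmp hZV
    exact ⟨C, hC, β, hβ, fun x hx => by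
      have := hineq (x : V) (by rwa [hcoe x])
      rwa [hcoe x, hgZ x] at this⟩
  · -- nonempty zero set case
    intro hZW
    have hZV : {x : V | g x = 0}.Nonempty := by
      obtain ⟨w, hw⟩ := hZW
      exact ⟨(w : V), by simpa [Set.mem_setOf_eq, hgZ w] using hw⟩
    obtain ⟨C, hC, α, β, hα, hβ, hineq⟩ := hNE hZV
    refine ⟨C / M ^ α, by positivity, α, β, hα, hβ, fun x hx => ?_⟩
    -- distance comparison
    have hdist : Metric.infDist x {y : W | f y = 0}
        ≤ M * Metric.infDist (x : V) {y : V | g y = 0} := by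
      set d := Metric.infDist x {y : W | f y = 0} with hd
      rw [← div_le_iff₀' hM0]
      by_contra hlt
      push_neg at hlt
      obtain ⟨y, hy, hdy⟩ := (Metric.infDist_lt_iff hZV).1 hlt
      have hπy : π y ∈ {y : W | f y = 0} := hy
      have h1 : d ≤ dist x (π y) := Metric.infDist_le_dist_of_mem hπy
      have h2 : dist x (π y) ≤ M * dist (x : V) y := by
        rw [dist_eq_norm, dist_eq_norm, ← hcoe (x - π y)]
        have : ((x - π y : W) : V) = (π ((x : V) - y) : V) := by
          rw [map_sub, hππ x]
        rw [this]
        exact hM _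
      have h3 : M * dist (x : V) y < M * (d / M) :=
        (mul_lt_mul_iff_right₀ hM0).2 hdy
      rw [mul_div_cancel₀ _ (ne_of_gt hM0)] at h3
      exact absurd (h1.trans_lt (h2.trans_lt h3)) (lt_irrefl d)
    have hx' : 1 ≤ ‖(x : V)‖ := by rwa [hcoe x]
    have hmain := hineq (x : V) hx'
    rw [hcoe x, hgZ x] at hmain
    refine le_trans ?_ hmain
    have hnx : (0:ℝ) < ‖x‖ ^ β := Real.rpow_pos_of_pos (lt_of_lt_of_le one_pos hx) β
    rw [div_le_div_iff_of_pos_right hnx]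
    have hdnn : (0:ℝ) ≤ Metric.infDist x {y : W | f y = 0} := Metric.infDist_nonneg
    have hpow : Metric.infDist x {y : W | f y = 0} ^ α
        ≤ M ^ α * Metric.infDist (x : V) {y : V | g y = 0} ^ α := by
      rw [← Real.mul_rpow hM0.le Metric.infDist_nonneg]
      exact Real.rpow_le_rpow hdnn hdist hα
    calc C / M ^ α * Metric.infDist x {y : W | f y = 0} ^ α
        ≤ C / M ^ α * (M ^ α * Metric.infDist (x : V) {y : V | g y = 0} ^ α) :=
          mul_le_mul_of_nonneg_left hpow (by positivity)
      _ = C * Metric.infDist (x : V) {y : V | g y = 0} ^ α := by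
          field_simp
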